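/- If 𝒜 ⊆ Q⊚ is a maximal antichain, n ∈ ω, and a is a finite subset of 2^{<ω}, then there is a finite set A ⊆ 𝒜 such that for every w ⊆ 2^ω with |w| = n there is r ∈ A compatible with ⟨a,w⟩ in Q⊚. -/
import Mathlib


/-- Restriction `η↾l` of `η ∈ 2^ω` to its first `l` entries, as a finite binary sequence. -/
def restrict (η : ℕ → Bool) (l : ℕ) : List Bool := List.ofFn (fun i : Fin l => η i)

/-- Conditions of the forcing notion `Q⊚`: pairs `⟨a, w⟩` with `a` a finite set of
finite binary sequences and `w` a finite set of elements of Cantor space. -/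
abbrev QCirc : Type := Finset (List Bool) × Finset (ℕ → Bool)

/-- The order of `Q⊚` (a stronger condition is the greater one). -/
def QCirc.le (p q : QCirc) : Prop :=
  p.1 ⊆ q.1 ∧ p.2 ⊆ q.2 ∧
    ∀ η ∈ p.2, ∀ l : ℕ, restrict η l ∈ q.1 → restrict η l ∈ p.1

/-- Compatibility in a forcing notion: a common upper bound exists. -/
def PCompat {P : Type} (le : P → P → Prop) (p q : P) : Prop :=
  ∃ r, le p r ∧ le q r


/-- A set `A ⊆ P` is an antichain if its elements are pairwise incompatible. -/
def PAntichain {P : Type} (le : P → P → Prop) (A : Set P) : Prop :=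
  ∀ p ∈ A, ∀ q ∈ A, p ≠ q → ¬ PCompat le p q

/-- A maximal antichain: an antichain such that every condition is compatible
with some of its members. -/
def PMaxAntichain {P : Type} (le : P → P → Prop) (A : Set P) : Prop :=
  PAntichain le A ∧ ∀ p : P, ∃ q ∈ A, PCompat le p q

/-- For every maximal antichain `𝒜` of `Q⊚`, `n ∈ ω` and finite `a ⊆ 2^{<ω}` there is a
finite `A ⊆ 𝒜` such that every condition `⟨a,w⟩` with `|w| = n` is compatible with
some member of `A`. -/
-- compatibility criterion
lemma compat_iff (a b : Finset (List Bool)) (w v : Finset (ℕ → Bool)) :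
    PCompat QCirc.le (a, w) (b, v) ↔
      (∀ η ∈ w, ∀ l, restrict η l ∈ b → restrict η l ∈ a) ∧
      (∀ η ∈ v, ∀ l, restrict η l ∈ a → restrict η l ∈ b) := by
  classical
  constructor
  · rintro ⟨⟨c, u⟩, ⟨hac, hwu, h1⟩, ⟨hbc, hvu, h2⟩⟩
    exact ⟨fun η hη l hl => h1 η hη l (hbc hl), fun η hη l hl => h2 η hη l (hac hl)⟩
  · rintro ⟨h1, h2⟩
    refine ⟨(a ∪ b, w ∪ v), ⟨Finset.subset_union_left, Finset.subset_union_left, ?_⟩,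
      ⟨Finset.subset_union_right, Finset.subset_union_right, ?_⟩⟩
    · intro η hη l hl
      rcases Finset.mem_union.1 hl with h | h
      · exact h
      · exact h1 η hη l h
    · intro η hη l hl
      rcases Finset.mem_union.1 hl with h | h
      · exact h2 η hη l h
      · exact h

lemma restrict_congr {η η' : ℕ → Bool} {l N : ℕ} (hl : l ≤ N)
    (h : ∀ k < N, η k = η' k) : restrict η l = restrict η' l := by
  unfold restrict
  exact congrArg List.ofFn (funext fun ⟨k, hk⟩ => h k (lt_of_lt_of_le hk hl))

theorem qcirc_maxantichain_finite_trace
    (𝒜 : Set QCirc) (h𝒜 : PMaxAntichain QCirc.le 𝒜) (n : ℕ) (a : Finset (List Bool)) :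
    ∃ A : Finset QCirc, ↑A ⊆ 𝒜 ∧
      ∀ w : Finset (ℕ → Bool), w.card = n → ∃ r ∈ A, PCompat QCirc.le (a, w) r := by
  classical
  obtain ⟨-, hmax⟩ := h𝒜
  choose q hqA hqc using fun u : Fin n → (ℕ → Bool) =>
    hmax (a, Finset.image u Finset.univ)
  set N : (Fin n → (ℕ → Bool)) → ℕ := fun u => (q u).1.sup List.length + 1 with hN
  set U : (Fin n → (ℕ → Bool)) → Set (Fin n → (ℕ → Bool)) :=
    fun u => ⋂ (i : Fin n), ⋂ (k : Fin (N u)), {u' | u' i k.val = u i k.val} with hU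
  have hopen : ∀ u, IsOpen (U u) := by
    intro u
    refine isOpen_iInter_of_finite fun i => isOpen_iInter_of_finite fun k => ?_
    have : Continuous fun u' : Fin n → (ℕ → Bool) => u' i k.val :=
      (continuous_apply k.val).comp (continuous_apply i)
    exact (isOpen_discrete {u i k.val}).preimage this
  have hcover : (Set.univ : Set (Fin n → (ℕ → Bool))) ⊆ ⋃ u, U u := by
    intro u _
    exact Set.mem_iUnion.2 ⟨u, Set.mem_iInter.2 fun i => Set.mem_iInter.2 fun k => rfl⟩
  obtain ⟨T, hT⟩ := isCompact_univ.elim_finite_subcover U hopen hcover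
  refine ⟨T.image q, ?_, ?_⟩
  · intro r hr
    simp only [Finset.coe_image, Set.mem_image, Finset.mem_coe] at hr
    obtain ⟨u, -, rfl⟩ := hr
    exact hqA u
  · intro w hw
    -- enumerate w
    obtain ⟨e⟩ : Nonempty (w ≃ Fin n) := ⟨w.equivFinOfCardEq hw⟩
    set u : Fin n → (ℕ → Bool) := fun i => (e.symm i : ℕ → Bool) with hu
    have himg : Finset.image u Finset.univ = w := by
      ext x
      simp only [Finset.mem_image, Finset.mem_univ, true_and]
      constructor
      · rintro ⟨i, rfl⟩; exact (e.symm i).2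
      · intro hx; exact ⟨e ⟨x, hx⟩, by simp [hu]⟩
    have := hT (Set.mem_univ u)
    simp only [Set.mem_iUnion] at this
    obtain ⟨u₀, hu₀T, huU⟩ := this
    have hagree : ∀ i : Fin n, ∀ k < N u₀, u i k = u₀ i k := by
      intro i k hk
      have := Set.mem_iInter.1 (Set.mem_iInter.1 huU i) ⟨k, hk⟩
      exact this
    refine ⟨q u₀, Finset.mem_image.2 ⟨u₀, hu₀T, rfl⟩, ?_⟩
    have hc := (compat_iff a (q u₀).1 (Finset.image u₀ Finset.univ) (q u₀).2).1 (hqc u₀)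
    refine (compat_iff a (q u₀).1 w (q u₀).2).2 ⟨?_, hc.2⟩
    intro η hη l hl
    rw [← himg] at hη
    obtain ⟨i, -, rfl⟩ := Finset.mem_image.1 hη
    have hlN : l < N u₀ := by
      have h1 : l ≤ (q u₀).1.sup List.length := by
        have := Finset.le_sup (f := List.length) hl
        simpa [restrict, List.length_ofFn] using this
      exact Nat.lt_succ_of_le h1
    have hre : restrict (u i) l = restrict (u₀ i) l :=
      restrict_congr (le_of_lt hlN) (hagree i)
    rw [hre] at hl ⊢
    exact hc.1 (u₀ i) (Finset.mem_image.2 ⟨i, Finset.mem_univ i, rfl⟩) l hl
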